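/- arXiv:1610.06374 — 2 statements merged into one kernel-verified Lean document; each statement's English description precedes it below -/
import Mathlib

section
/- For any irrational real number ξ, there are arbitrarily large integers X such that the system ‖xξ‖ ≤ 1/(2X) and 0 < x ≤ X has no integer solution x, where ‖·‖ denotes the distance to the nearest integer. -/
/-- For any irrational real number ξ, there are arbitrarily large integers X such that
the system ‖xξ‖ ≤ 1/(2X), 0 < x ≤ X has no integer solution x. -/
theorem stmt_0 (ξ : ℝ) (hξ : Irrational ξ) :
    ∀ X₀ : ℕ, ∃ X : ℕ, X₀ ≤ X ∧
      ¬ ∃ x n : ℤ, 0 < x ∧ x ≤ (X : ℤ) ∧ |(x : ℝ) * ξ - (n : ℝ)| ≤ 1 / (2 * (X : ℝ)) := by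
  classical
  by_contra hcon
  push_neg at hcon
  obtain ⟨X₀, hX₀⟩ := hcon
  -- distance from m·ξ to the nearest integer
  set f : ℤ → ℝ := fun m => |(m : ℝ) * ξ - (round ((m : ℝ) * ξ) : ℝ)| with hf
  have hf_min : ∀ m n : ℤ, f m ≤ |(m : ℝ) * ξ - (n : ℝ)| := fun m n => round_le _ n
  have hf_pos : ∀ m : ℤ, m ≠ 0 → 0 < f m := by
    intro m hm
    have : Irrational ((m : ℝ) * ξ) := hξ.intCast_mul hm
    have := this.ne_int (round ((m : ℝ) * ξ))
    simpa [hf, sub_eq_zero] using abs_pos.mpr (sub_ne_zero.mpr this)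
  -- witnesses from hypothesis
  have hW : ∀ X : ℕ, X₀ ≤ X → ∃ x : ℤ, 0 < x ∧ x ≤ (X : ℤ) ∧ f x ≤ 1 / (2 * (X : ℝ)) := by
    intro X hX
    obtain ⟨x, n, hx0, hxX, habs⟩ := hX₀ X hX
    exact ⟨x, hx0, hxX, le_trans (hf_min x n) habs⟩
  set B : ℕ := X₀ + 1 with hB
  -- key lemma: for T ≥ B, f T is minimal among f m for 1 ≤ m ≤ T
  have key : ∀ T : ℕ, B ≤ T → ∀ m : ℤ, 0 < m → m ≤ (T : ℤ) → f (T : ℤ) ≤ f m := by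
    intro T hT
    have hT1 : 1 ≤ T := le_trans (Nat.le_add_left 1 X₀) hT
    -- minimizer on [1, T]
    obtain ⟨x, hxS, hxmin⟩ := Finset.exists_min_image (Finset.Icc (1 : ℤ) (T : ℤ)) f
      ⟨1, Finset.mem_Icc.mpr ⟨le_refl 1, by exact_mod_cast hT1⟩⟩
    obtain ⟨hx1, hxT⟩ := Finset.mem_Icc.mp hxS
    have hx0 : (0 : ℤ) < x := hx1
    have hfx : 0 < f x := hf_pos x (by omega)
    -- find a drop below f x
    have hQex : ∃ k : ℕ, 0 < (k : ℤ) ∧ f (k : ℤ) < f x := by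
      set Y : ℕ := X₀ + ⌈1 / f x⌉₊ + 1 with hY
      obtain ⟨y, hy0, hyY, hyf⟩ := hW Y (by omega)
      refine ⟨y.toNat, ?_, ?_⟩
      · simpa [Int.toNat_of_nonneg hy0.le] using hy0
      · rw [Int.toNat_of_nonneg hy0.le]
        refine lt_of_le_of_lt hyf ?_
        have hYgt : 1 / f x < (Y : ℝ) := by
          have : (⌈1 / f x⌉₊ : ℝ) < (Y : ℝ) := by exact_mod_cast by omega
          exact lt_of_le_of_lt (Nat.le_ceil _) this
        have hY0 : (0 : ℝ) < (Y : ℝ) := by positivity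
        rw [div_lt_iff₀ (by positivity)]
        rw [div_lt_iff₀ hfx] at hYgt
        nlinarith
    set x' : ℕ := Nat.find hQex with hx'def
    obtain ⟨hx'0, hx'lt⟩ := Nat.find_spec hQex
    rw [← hx'def] at hx'0 hx'lt
    have hx'min : ∀ k : ℕ, k < x' → ¬(0 < (k : ℤ) ∧ f (k : ℤ) < f x) := fun k hk =>
      Nat.find_min hQex hk
    -- x' > T
    have hTx' : T < x' := by
      by_contra hc
      push_neg at hc
      have : f x ≤ f (x' : ℤ) := hxmin _ (Finset.mem_Icc.mpr ⟨hx'0, by exact_mod_cast hc⟩)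
      linarith
    -- apply hypothesis at X = x' - 1
    obtain ⟨w, hw0, hwle, hwf⟩ := hW (x' - 1) (by omega)
    have hcast1 : ((x' - 1 : ℕ) : ℤ) = (x' : ℤ) - 1 := by omega
    have hfxw : f x ≤ f w := by
      have hwlt : w.toNat < x' := by omega
      have := hx'min w.toNat hwlt
      push_neg at this
      have h2 := this (by simpa [Int.toNat_of_nonneg hw0.le] using hw0)
      rw [Int.toNat_of_nonneg hw0.le] at h2
      linarith
    have hx'1R : (0 : ℝ) < ((x' - 1 : ℕ) : ℝ) := by
      have : 1 ≤ x' - 1 := by omega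
      exact_mod_cast Nat.lt_of_lt_of_le Nat.zero_lt_one this
    have hr : f x ≤ 1 / (2 * ((x' - 1 : ℕ) : ℝ)) := le_trans hfxw hwf
    -- determinant argument
    set n : ℤ := round ((x : ℝ) * ξ) with hn
    set n' : ℤ := round (((x' : ℤ) : ℝ) * ξ) with hn'
    set D : ℤ := x' * n - x * n' with hD
    have hDr : (D : ℝ) = (x : ℝ) * (((x' : ℤ) : ℝ) * ξ - (n' : ℝ))
        - ((x' : ℤ) : ℝ) * ((x : ℝ) * ξ - (n : ℝ)) := by
      simp only [hD]; push_cast; ring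
    have hxx' : (x : ℝ) ≤ ((x' : ℤ) : ℝ) := by exact_mod_cast le_trans hxT (by exact_mod_cast hTx'.le)
    have hxR : (0 : ℝ) < (x : ℝ) := by exact_mod_cast hx0
    have hx'R : (0 : ℝ) < ((x' : ℤ) : ℝ) := by exact_mod_cast hx'0
    have habs1 : |(x : ℝ) * (((x' : ℤ) : ℝ) * ξ - (n' : ℝ))| = (x : ℝ) * f (x' : ℤ) := by
      rw [abs_mul, abs_of_pos hxR]
    have habs2 : |((x' : ℤ) : ℝ) * ((x : ℝ) * ξ - (n : ℝ))| = ((x' : ℤ) : ℝ) * f x := by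
      rw [abs_mul, abs_of_pos hx'R]
    have hDne : D ≠ 0 := by
      intro h0
      rw [h0] at hDr
      have heq : (x : ℝ) * (((x' : ℤ) : ℝ) * ξ - (n' : ℝ))
          = ((x' : ℤ) : ℝ) * ((x : ℝ) * ξ - (n : ℝ)) := by
        push_cast at hDr ⊢; linarith
      have := congrArg abs heq
      rw [habs1, habs2] at this
      nlinarith [hf_pos (x' : ℤ) (by exact_mod_cast hx'0.ne')]
    have h1D : (1 : ℝ) ≤ |(D : ℝ)| := by
      have := Int.one_le_abs hDne
      exact_mod_cast this
    have hDle : |(D : ℝ)| ≤ (x : ℝ) * f (x' : ℤ) + ((x' : ℤ) : ℝ) * f x := by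
      rw [hDr]
      calc |(x : ℝ) * (((x' : ℤ) : ℝ) * ξ - (n' : ℝ))
            - ((x' : ℤ) : ℝ) * ((x : ℝ) * ξ - (n : ℝ))|
          ≤ |(x : ℝ) * (((x' : ℤ) : ℝ) * ξ - (n' : ℝ))|
            + |((x' : ℤ) : ℝ) * ((x : ℝ) * ξ - (n : ℝ))| := abs_sub _ _
        _ = (x : ℝ) * f (x' : ℤ) + ((x' : ℤ) : ℝ) * f x := by rw [habs1, habs2]
    -- conclude x = T
    have hsum : (1 : ℝ) < ((x : ℝ) + ((x' : ℤ) : ℝ)) * f x := by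
      nlinarith
    have hsum2 : ((x : ℝ) + ((x' : ℤ) : ℝ)) * f x
        ≤ ((x : ℝ) + ((x' : ℤ) : ℝ)) * (1 / (2 * ((x' - 1 : ℕ) : ℝ))) := by
      apply mul_le_mul_of_nonneg_left hr (by positivity)
    have hx'cast : ((x' - 1 : ℕ) : ℝ) = ((x' : ℤ) : ℝ) - 1 := by
      exact_mod_cast congrArg (fun z : ℤ => (z : ℝ)) hcast1
    have hxT' : (x : ℝ) + ((x' : ℤ) : ℝ) > 2 * ((x' - 1 : ℕ) : ℝ) := by
      by_contra hc
      push_neg at hc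
      have h2 : ((x : ℝ) + ((x' : ℤ) : ℝ)) * (1 / (2 * ((x' - 1 : ℕ) : ℝ))) ≤ 1 := by
        rw [mul_one_div, div_le_one (by positivity)]
        linarith
      linarith
    have hxeqT : x = (T : ℤ) := by
      have hxge : ((x' : ℤ) : ℝ) - 2 < (x : ℝ) := by
        rw [hx'cast] at hxT'
        linarith
      have hxgeZ : (x' : ℤ) - 2 < x := by exact_mod_cast hxge
      have hTx'Z : (T : ℤ) + 1 ≤ (x' : ℤ) := by exact_mod_cast hTx'
      omega
    intro m hm0 hmT
    rw [← hxeqT]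
    exact hxmin m (Finset.mem_Icc.mpr ⟨hm0, hmT⟩)
  -- hence f T ≤ 1/(2T) for all T ≥ B
  have hle : ∀ T : ℕ, B ≤ T → f (T : ℤ) ≤ 1 / (2 * (T : ℝ)) := by
    intro T hT
    obtain ⟨w, hw0, hwT, hwf⟩ := hW T (by omega)
    exact le_trans (key T hT w hw0 hwT) hwf
  -- final contradiction using f 1 > 0
  have hc : 0 < f 1 := hf_pos 1 one_ne_zero
  set T : ℕ := B + ⌈1 / f 1⌉₊ + 1 with hTdef
  have hTB : B ≤ T := by omega
  have hT1B : B ≤ T + 1 := by omega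
  have hTR : (0 : ℝ) < (T : ℝ) := by positivity
  have hTgt : 1 / f 1 < (T : ℝ) := by
    have : (⌈1 / f 1⌉₊ : ℝ) < (T : ℝ) := by exact_mod_cast by omega
    exact lt_of_le_of_lt (Nat.le_ceil _) this
  have hinv : 1 / (T : ℝ) < f 1 := by
    rw [div_lt_iff₀ hTR]
    rw [div_lt_iff₀ hc] at hTgt
    nlinarith
  set k : ℤ := round ((((T + 1 : ℕ) : ℤ) : ℝ) * ξ) - round (((T : ℕ) : ℝ) * ξ) with hk
  have hfk : f 1 ≤ |(1 : ℝ) * ξ - (k : ℝ)| := by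
    have := hf_min 1 k
    push_cast at this
    convert this using 3
  have hbound : |(1 : ℝ) * ξ - (k : ℝ)| ≤ f ((T + 1 : ℕ) : ℤ) + f (T : ℤ) := by
    have : (1 : ℝ) * ξ - (k : ℝ) =
        ((((T + 1 : ℕ) : ℤ) : ℝ) * ξ - (round ((((T + 1 : ℕ) : ℤ) : ℝ) * ξ) : ℝ))
        - (((T : ℕ) : ℝ) * ξ - (round (((T : ℕ) : ℝ) * ξ) : ℝ)) := by
      push_cast [hk]; ring
    rw [this]
    exact le_trans (abs_sub _ _) (by rfl)
  have h1 := hle T hTB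
  have h2 := hle (T + 1) hT1B
  have hT1R : (0 : ℝ) < ((T + 1 : ℕ) : ℝ) := by positivity
  have : f 1 ≤ 1 / (2 * ((T + 1 : ℕ) : ℝ)) + 1 / (2 * (T : ℝ)) := by
    calc f 1 ≤ |(1 : ℝ) * ξ - (k : ℝ)| := hfk
      _ ≤ f ((T + 1 : ℕ) : ℤ) + f (T : ℤ) := hbound
      _ ≤ 1 / (2 * ((T + 1 : ℕ) : ℝ)) + 1 / (2 * (T : ℝ)) := by
          push_cast at h2 ⊢
          push_cast at h1
          linarith
  have hfin : 1 / (2 * ((T + 1 : ℕ) : ℝ)) + 1 / (2 * (T : ℝ)) < 1 / (T : ℝ) := by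
    have hlt : 1 / (2 * ((T + 1 : ℕ) : ℝ)) < 1 / (2 * (T : ℝ)) := by
      apply one_div_lt_one_div_of_lt (by positivity)
      push_cast; linarith
    have : 1 / (2 * (T : ℝ)) + 1 / (2 * (T : ℝ)) = 1 / (T : ℝ) := by
      field_simp; ring
    linarith
  linarith
end

section
/- Let θ ∈ ℝ² ∖ ℚ² with best approximation vectors (xₙ), and let μ' > μ > 0. If λ₁(xₙ) ≤ |xₙ|^{-μ'} for all n large enough, then for all sufficiently large X there exists an integer 0 < q ≤ X with dist(qθ, ℤ²) ≤ X^{-μ}; that is, θ ∈ Sing*(μ). -/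
open Filter Metric

/-- The set of integer points of `ℝ²`. -/
def intPts : Set (EuclideanSpace ℝ (Fin 2)) := {v | ∀ i, ∃ m : ℤ, v i = (m : ℝ)}

/-- The lattice `Λ_x = ℤ² + ℤ·(p/q)` for `x = (p, q)`. -/
def latt (p : Fin 2 → ℤ) (q : ℤ) : Set (EuclideanSpace ℝ (Fin 2)) :=
  {w | ∃ (m : Fin 2 → ℤ) (n : ℤ), w = fun i => (m i : ℝ) - (n : ℝ) * ((p i : ℝ) / (q : ℝ))}

/-- First minimum of a set of vectors: infimum of norms of nonzero elements. -/
noncomputable def firstMin (L : Set (EuclideanSpace ℝ (Fin 2))) : ℝ :=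
  sInf {r : ℝ | ∃ v ∈ L, v ≠ 0 ∧ ‖v‖ = r}

lemma coord_abs_le_norm (x : EuclideanSpace ℝ (Fin 2)) (i : Fin 2) : |x i| ≤ ‖x‖ := by
  rw [EuclideanSpace.norm_eq]
  have h1 : |x i| = Real.sqrt (‖x i‖ ^ 2) := by
    rw [Real.sqrt_sq_eq_abs]; simp [abs_abs]
  rw [h1]
  apply Real.sqrt_le_sqrt
  exact Finset.single_le_sum (fun j _ => sq_nonneg ‖x j‖) (Finset.mem_univ i)

/-- If the best approximation vectors `xₙ` of `θ ∈ ℝ² ∖ ℚ²` satisfy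
`λ₁(xₙ) ≤ |xₙ|^{-μ'}` for all large `n`, with `μ' > μ > 0`, then `θ ∈ Sing*(μ)`:
for all large real `X` there is an integer `0 < q ≤ X` with `dist(qθ, ℤ²) ≤ X^{-μ}`. -/
theorem stmt_10 (θ : EuclideanSpace ℝ (Fin 2))
    (hθ : ¬ ∃ a : Fin 2 → ℚ, ∀ i, θ i = (a i : ℝ))
    (μ μ' : ℝ) (hμ : 0 < μ) (hμ' : μ < μ')
    (q : ℕ → ℤ) (p : ℕ → Fin 2 → ℤ)
    -- (xₙ) is the sequence of best approximation vectors of θ: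
    (hq0 : q 0 = 1)
    (hmono : ∀ n, q n < q (n + 1))
    (hp : ∀ n, dist ((q n : ℝ) • θ) (WithLp.toLp 2 (fun i => (p n i : ℝ))) =
      infDist ((q n : ℝ) • θ) intPts)
    (hdec : ∀ n, infDist ((q (n + 1) : ℝ) • θ) intPts < infDist ((q n : ℝ) • θ) intPts)
    (hmin : ∀ n, ∀ m : ℤ, q n < m → m < q (n + 1) →
      infDist ((q n : ℝ) • θ) intPts ≤ infDist ((m : ℝ) • θ) intPts)
    (hlam : ∀ᶠ n : ℕ in atTop, firstMin (latt (p n) (q n)) ≤ (q n : ℝ) ^ (-μ')) :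
    ∀ᶠ X : ℝ in atTop, ∃ m : ℤ, 0 < m ∧ (m : ℝ) ≤ X ∧
      infDist ((m : ℝ) • θ) intPts ≤ X ^ (-μ) := by
  -- basic growth of q
  have hqlb : ∀ n : ℕ, (n : ℤ) + 1 ≤ q n := by
    intro n
    induction n with
    | zero => simp [hq0]
    | succ k ih => push_cast; have := hmono k; omega
  have hqpos : ∀ n : ℕ, 0 < q n := fun n => lt_of_lt_of_le (by positivity) (hqlb n)
  -- minimality over all denominators below q (n+1)
  have key_min : ∀ n : ℕ, ∀ m : ℤ, 0 < m → m < q (n + 1) →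
      infDist ((q n : ℝ) • θ) intPts ≤ infDist ((m : ℝ) • θ) intPts := by
    intro n
    induction n with
    | zero =>
      intro m hm0 hm1
      rcases eq_or_lt_of_le (show q 0 ≤ m by omega) with h | h
      · rw [← h]
      · exact hmin 0 m h hm1
    | succ k ih =>
      intro m hm0 hm2
      rcases lt_trichotomy m (q (k + 1)) with h | h | h
      · exact le_trans (hdec k).le (ih m hm0 h)
      · rw [h]
      · exact hmin (k + 1) m h hm2
  -- q n → ∞ as reals
  have hqtop : Tendsto (fun n : ℕ => (q n : ℝ)) atTop atTop := by
    apply tendsto_atTop_mono (fun n => ?_) tendsto_natCast_atTop_atTop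
    exact_mod_cast le_trans (by push_cast; linarith) (hqlb n)
  have hμ'pos : 0 < μ' := lt_trans hμ hμ'
  have hsmall : ∀ᶠ n : ℕ in atTop, 2 * (q n : ℝ) ^ (-μ') < 1 := by
    have h0 : Tendsto (fun n : ℕ => (q n : ℝ) ^ (-μ')) atTop (nhds 0) :=
      (tendsto_rpow_neg_atTop hμ'pos).comp hqtop
    have := h0.const_mul 2
    simp only [mul_zero] at this
    exact this.eventually_lt_const one_pos
  -- key estimate: for large n, infDist (q n • θ) ≤ 4 * (q (n+1))^(-μ')
  have key : ∀ n : ℕ, firstMin (latt (p (n + 1)) (q (n + 1))) ≤ (q (n + 1) : ℝ) ^ (-μ') →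
      2 * (q (n + 1) : ℝ) ^ (-μ') < 1 →
      infDist ((q n : ℝ) • θ) intPts ≤ 4 * (q (n + 1) : ℝ) ^ (-μ') := by
    intro n hl hsm
    set Q : ℤ := q (n + 1) with hQdef
    set P : Fin 2 → ℤ := p (n + 1) with hPdef
    have hQpos : 0 < Q := hqpos (n + 1)
    have hQR : (0 : ℝ) < (Q : ℝ) := by exact_mod_cast hQpos
    set ε : ℝ := (Q : ℝ) ^ (-μ') with hεdef
    have hεpos : 0 < ε := Real.rpow_pos_of_pos hQR _
    -- get a nonzero lattice vector of norm < 2ε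
    have hS : ∃ v ∈ latt P Q, v ≠ 0 ∧ ‖v‖ < 2 * ε := by
      set S : Set ℝ := {r : ℝ | ∃ v ∈ latt P Q, v ≠ 0 ∧ ‖v‖ = r} with hSdef
      have hne : S.Nonempty := by
        refine ⟨‖(EuclideanSpace.single 0 (1:ℝ) : EuclideanSpace ℝ (Fin 2))‖,
          (EuclideanSpace.single 0 (1:ℝ)), ?_, ?_, rfl⟩
        · exact ⟨fun i => if i = 0 then 1 else 0, 0, by
            funext i; by_cases h : i = 0 <;> simp [h, EuclideanSpace.single_apply]⟩
        · intro h
          have := congrFun (congrArg WithLp.ofLp h) (0 : Fin 2)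
          simp [EuclideanSpace.single_apply] at this
      have hbdd : BddBelow S := ⟨0, fun r ⟨v, _, _, hv⟩ => hv ▸ norm_nonneg v⟩
      have hlt : sInf S < 2 * ε := lt_of_le_of_lt hl (by linarith)
      obtain ⟨r, ⟨v, hvl, hv0, hvn⟩, hr⟩ := (csInf_lt_iff hbdd hne).mp hlt
      exact ⟨v, hvl, hv0, hvn ▸ hr⟩
    obtain ⟨v, ⟨m, b, hveq⟩, hv0, hvn⟩ := hS
    -- reduce b modulo Q
    set b0 : ℤ := b % Q with hb0def
    have hb0lo : 0 ≤ b0 := Int.emod_nonneg b (ne_of_gt hQpos)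
    have hb0hi : b0 < Q := Int.emod_lt_of_pos b hQpos
    set m0 : Fin 2 → ℤ := fun i => m i - (b / Q) * P i with hm0def
    have hveq0 : v = fun i => (m0 i : ℝ) - (b0 : ℝ) * ((P i : ℝ) / (Q : ℝ)) := by
      rw [hveq]; funext i
      have hbint : (Q * (b / Q) + b % Q : ℤ) = b := Int.mul_ediv_add_emod b Q
      have hb : (b : ℝ) = (Q : ℝ) * ((b / Q : ℤ) : ℝ) + (b0 : ℝ) := by
        rw [hb0def]; exact_mod_cast hbint.symm
      simp only [hm0def]
      push_cast
      rw [hb]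
      field_simp
      ring
    -- b0 ≠ 0
    have hb0ne : b0 ≠ 0 := by
      intro h
      have hvint : v = fun i => ((m0 i : ℤ) : ℝ) := by
        rw [hveq0]; funext i; simp [h]
      obtain ⟨i, hi⟩ : ∃ i, m0 i ≠ 0 := by
        by_contra hc
        push_neg at hc
        apply hv0
        ext i; rw [hvint]; simp [hc i]
      have h1 : (1 : ℝ) ≤ |v i| := by
        rw [show v i = ((m0 i : ℤ) : ℝ) from congrFun hvint i]
        have hone : (1 : ℤ) ≤ |m0 i| := by
          rcases lt_trichotomy (m0 i) 0 with h | h | h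
          · rw [abs_of_neg h]; omega
          · exact absurd h hi
          · rw [abs_of_pos h]; omega
        rw [← Int.cast_abs]
        exact_mod_cast hone
      have h2 := coord_abs_le_norm v i
      linarith
    -- normalize to a with 1 ≤ a, 2a ≤ Q, and a vector w
    have hwlog : ∃ (w : Fin 2 → ℤ) (a : ℤ), 1 ≤ a ∧ 2 * a ≤ Q ∧
        ‖(show EuclideanSpace ℝ (Fin 2) from
          WithLp.toLp 2 fun i => (w i : ℝ) - (a : ℝ) * ((P i : ℝ) / (Q : ℝ)))‖ < 2 * ε := by
      by_cases hc : 2 * b0 ≤ Q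
      · exact ⟨m0, b0, by omega, hc, by rw [← hveq0]; exact hvn⟩
      · refine ⟨fun i => P i - m0 i, Q - b0, by omega, by omega, ?_⟩
        have : (show EuclideanSpace ℝ (Fin 2) from
            WithLp.toLp 2 fun i => ((P i - m0 i : ℤ) : ℝ) - ((Q - b0 : ℤ) : ℝ) * ((P i : ℝ) / (Q : ℝ))) = -v := by
          ext i
          show ((P i - m0 i : ℤ) : ℝ) - ((Q - b0 : ℤ) : ℝ) * ((P i : ℝ) / (Q : ℝ)) = -(v i)
          rw [hveq0]
          push_cast
          field_simp
          ring
        rw [this, norm_neg]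
        exact hvn
    obtain ⟨w, a, ha1, ha2, hwn⟩ := hwlog
    have haQ : a < Q := by omega
    set wv : EuclideanSpace ℝ (Fin 2) := WithLp.toLp 2 fun i => (w i : ℝ) with hwvdef
    set xh : EuclideanSpace ℝ (Fin 2) := WithLp.toLp 2 fun i => (P i : ℝ) / (Q : ℝ) with hxhdef
    set d : ℝ := infDist ((Q : ℝ) • θ) intPts with hddef
    set D : ℝ := infDist ((q n : ℝ) • θ) intPts with hDdef
    have hdD : d < D := hdec n
    have hDnn : 0 ≤ D := infDist_nonneg
    -- ‖θ - xh‖ = d / Q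
    have hth : ‖θ - xh‖ = d / (Q : ℝ) := by
      have h1 : (Q : ℝ) • θ - (show EuclideanSpace ℝ (Fin 2) from WithLp.toLp 2 fun i => (P i : ℝ))
          = (Q : ℝ) • (θ - xh) := by
        ext i
        show (Q : ℝ) * θ i - (P i : ℝ) = (Q : ℝ) * (θ i - (P i : ℝ) / (Q : ℝ))
        field_simp
      have h2 : d = ‖(Q : ℝ) • θ - (show EuclideanSpace ℝ (Fin 2) from WithLp.toLp 2 fun i => (P i : ℝ))‖ := by
        rw [hddef, ← hp (n + 1), dist_eq_norm]
      rw [h2, h1, norm_smul, Real.norm_eq_abs, abs_of_pos hQR]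
      field_simp
    -- D ≤ infDist (a • θ)
    have hDa : D ≤ infDist ((a : ℝ) • θ) intPts := key_min n a (by omega) haQ
    -- infDist (a • θ) ≤ a * ‖θ - xh‖ + ‖wv - a • xh‖
    have hwmem : wv ∈ intPts := fun i => ⟨w i, rfl⟩
    have hstep : infDist ((a : ℝ) • θ) intPts ≤ (a : ℝ) * (d / (Q : ℝ)) + 2 * ε := by
      have h1 : infDist ((a : ℝ) • θ) intPts ≤ dist ((a : ℝ) • θ) wv :=
        infDist_le_dist_of_mem hwmem
      have h2 : (a : ℝ) • θ - wv = (a : ℝ) • (θ - xh) - (wv - (a : ℝ) • xh) := by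
        module
      have h3 : wv - (a : ℝ) • xh = (show EuclideanSpace ℝ (Fin 2) from
          WithLp.toLp 2 fun i => (w i : ℝ) - (a : ℝ) * ((P i : ℝ) / (Q : ℝ))) := by
        ext i
        show wv i - (a : ℝ) * xh i = _
        rfl
      have h4 : dist ((a : ℝ) • θ) wv ≤ (a : ℝ) * (d / (Q : ℝ)) + 2 * ε := by
        rw [dist_eq_norm, h2]
        calc ‖(a : ℝ) • (θ - xh) - (wv - (a : ℝ) • xh)‖
            ≤ ‖(a : ℝ) • (θ - xh)‖ + ‖wv - (a : ℝ) • xh‖ := norm_sub_le _ _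
          _ ≤ (a : ℝ) * (d / (Q : ℝ)) + 2 * ε := by
              apply add_le_add
              · rw [norm_smul, Real.norm_eq_abs, hth,
                  abs_of_pos (by exact_mod_cast (by omega : (0:ℤ) < a) : (0:ℝ) < (a:ℝ))]
              · rw [h3]; exact hwn.le
      linarith
    -- (a/Q) * d ≤ d/2 ≤ D/2
    have hfrac : (a : ℝ) * (d / (Q : ℝ)) ≤ D / 2 := by
      have hdnn : 0 ≤ d := infDist_nonneg
      have h2a : (2 : ℝ) * (a : ℝ) ≤ (Q : ℝ) := by exact_mod_cast ha2
      have h : (a : ℝ) * d ≤ (D / 2) * (Q : ℝ) := by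
        nlinarith [mul_nonneg (show (0:ℝ) ≤ (Q:ℝ)/2 - (a:ℝ) by linarith) hdnn,
          mul_nonneg (show (0:ℝ) ≤ (Q:ℝ)/2 by linarith) (show (0:ℝ) ≤ D - d by linarith)]
      calc (a : ℝ) * (d / (Q : ℝ)) = ((a : ℝ) * d) / (Q : ℝ) := by ring
        _ ≤ ((D / 2) * (Q : ℝ)) / (Q : ℝ) := by gcongr
        _ = D / 2 := by field_simp
    have : D ≤ D / 2 + 2 * ε := le_trans hDa (le_trans hstep (by linarith))
    linarith
  -- assemble
  obtain ⟨N, hN⟩ := eventually_atTop.mp (hlam.and hsmall)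
  set C₀ : ℝ := (4 : ℝ) ^ (1 / (μ' - μ)) with hC0def
  have hC0ge1 : (1 : ℝ) ≤ C₀ :=
    Real.one_le_rpow (by norm_num) (le_of_lt (div_pos one_pos (by linarith)))
  rw [eventually_atTop]
  refine ⟨max ((q N : ℝ)) C₀, fun X hX => ?_⟩
  have hXqN : (q N : ℝ) ≤ X := le_trans (le_max_left _ _) hX
  have hXC0 : C₀ ≤ X := le_trans (le_max_right _ _) hX
  have hX1 : (1 : ℝ) ≤ X := le_trans hC0ge1 hXC0
  have hXpos : (0 : ℝ) < X := by linarith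
  -- find the largest n with q n ≤ X
  have hex : ∃ k : ℕ, ¬ ((q (N + k) : ℝ) ≤ X) := by
    refine ⟨⌈X⌉₊, ?_⟩
    push_neg
    have h1 : (⌈X⌉₊ : ℤ) + 1 ≤ q (N + ⌈X⌉₊) := le_trans (by push_cast; omega) (hqlb (N + ⌈X⌉₊))
    calc X ≤ (⌈X⌉₊ : ℝ) := Nat.le_ceil X
      _ < (⌈X⌉₊ : ℝ) + 1 := by linarith
      _ ≤ (q (N + ⌈X⌉₊) : ℝ) := by exact_mod_cast h1
  set k₀ : ℕ := Nat.find hex with hk₀def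
  have hk₀pos : k₀ ≠ 0 := by
    intro h
    have := Nat.find_spec hex
    rw [← hk₀def, h] at this
    simp at this
    linarith
  set n : ℕ := N + (k₀ - 1) with hndef
  have hnN : N ≤ n := by omega
  have hqnX : (q n : ℝ) ≤ X := by
    have := Nat.find_min hex (show k₀ - 1 < k₀ by omega)
    rw [not_not] at this
    exact this
  have hXqn1 : X < (q (n + 1) : ℝ) := by
    have := Nat.find_spec hex
    rw [← hk₀def] at this
    push_neg at this
    have heq : N + k₀ = n + 1 := by omega
    rw [heq] at this
    exact this
  obtain ⟨hl, hsm⟩ := hN (n + 1) (by omega)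
  have hkey := key n hl hsm
  refine ⟨q n, hqpos n, hqnX, ?_⟩
  -- 4 * (q (n+1))^(-μ') ≤ 4 * X^(-μ') ≤ X^(-μ)
  have h1 : ((q (n + 1) : ℝ)) ^ (-μ') ≤ X ^ (-μ') := by
    apply Real.rpow_le_rpow_of_nonpos hXpos hXqn1.le (by linarith)
  have h2 : 4 * X ^ (-μ') ≤ X ^ (-μ) := by
    have hC4 : C₀ ^ (μ' - μ) = 4 := by
      rw [hC0def, ← Real.rpow_mul (by norm_num : (0:ℝ) ≤ 4)]
      rw [one_div, inv_mul_cancel₀ (show μ' - μ ≠ 0 by linarith), Real.rpow_one]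
    have hXmm : (4 : ℝ) ≤ X ^ (μ' - μ) := by
      calc (4 : ℝ) = C₀ ^ (μ' - μ) := hC4.symm
        _ ≤ X ^ (μ' - μ) := Real.rpow_le_rpow (by positivity) hXC0 (by linarith)
    have hx1 : X ^ (μ' - μ) * X ^ (-μ') = X ^ (-μ) := by
      rw [← Real.rpow_add hXpos]; ring_nf
    have hxp : (0 : ℝ) < X ^ (-μ') := Real.rpow_pos_of_pos hXpos _
    nlinarith
  calc infDist ((q n : ℝ) • θ) intPts ≤ 4 * ((q (n + 1) : ℝ)) ^ (-μ') := hkey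
    _ ≤ 4 * X ^ (-μ') := by linarith
    _ ≤ X ^ (-μ) := h2
end
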